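/- arXiv:1211.5896 — 3 statements merged into one kernel-verified Lean document; each statement's English description precedes it below -/
import Mathlib

section
/- Let f be a continuously differentiable real-valued function on [a,b], let δ > 0 and x ∈ ℝ. Then (1/(2δ)) ∫_a^b 1_{|f(t)-x| ≤ δ} |f'(t)| dt ≤ N_{f'}(0,[a,b]) + 1, where N_{f'}(0,[a,b]) denotes the number of zeros of f' in [a,b] (assumed finite). -/
open Set MeasureTheory

lemma mono_piece (A B a b δ x : ℝ) (hδ : 0 < δ) (f g : ℝ → ℝ)
    (hg : ContinuousOn g (Icc A B))
    (hd : ∀ t ∈ Icc A B, HasDerivWithinAt f (g t) (Icc A B) t)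
    (hAa : A ≤ a) (hbB : b ≤ B)
    (hz : ∀ t ∈ Ioo a b, g t ≠ 0) :
    ∫ t in Ioo a b, (if |f t - x| ≤ δ then |g t| else 0) ≤ 2 * δ := by
  rcases le_or_gt b a with h | hab
  · rw [Ioo_eq_empty (by exact fun h' => absurd h (not_le.2 h'))]
    simp [Measure.restrict_empty]
    positivity
  have hsub : Ioo a b ⊆ Icc A B := fun t ht => ⟨hAa.trans ht.1.le, ht.2.le.trans hbB⟩
  -- constant sign
  have hsign : (∀ t ∈ Ioo a b, 0 < g t) ∨ (∀ t ∈ Ioo a b, g t < 0) := by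
    by_contra hc
    push_neg at hc
    obtain ⟨⟨t₁, ht₁, h₁⟩, ⟨t₂, ht₂, h₂⟩⟩ := hc
    have h₁' : g t₁ < 0 := lt_of_le_of_ne h₁ (hz t₁ ht₁)
    have h₂' : 0 < g t₂ := lt_of_le_of_ne h₂ (fun h => hz t₂ ht₂ h.symm)
    have hcont : ContinuousOn g (uIcc t₁ t₂) :=
      hg.mono (fun s hs => hsub ⟨lt_of_lt_of_le (lt_min ht₁.1 ht₂.1) hs.1,
        lt_of_le_of_lt hs.2 (max_lt ht₁.2 ht₂.2)⟩)
    have := intermediate_value_uIcc hcont (a := t₁) (b := t₂)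
    have h0 : (0:ℝ) ∈ uIcc (g t₁) (g t₂) := by
      rw [mem_uIcc]; left; exact ⟨h₁'.le, h₂'.le⟩
    obtain ⟨c, hc1, hc2⟩ := this h0
    exact hz c ⟨lt_of_lt_of_le (lt_min ht₁.1 ht₂.1) hc1.1,
      lt_of_le_of_lt hc1.2 (max_lt ht₁.2 ht₂.2)⟩ hc2
  -- derivative within Ioo a b
  have hd' : ∀ t ∈ Ioo a b, HasDerivWithinAt f (g t) (Ioo a b) t :=
    fun t ht => (hd t (hsub ht)).mono hsub
  have hderiv : ∀ t ∈ Ioo a b, HasDerivAt f (g t) t := by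
    intro t ht
    apply (hd t (hsub ht)).hasDerivAt
    exact Icc_mem_nhds (lt_of_le_of_lt hAa ht.1) (lt_of_lt_of_le ht.2 hbB)
  have hfc : ContinuousOn f (Ioo a b) := fun t ht => (hd' t ht).continuousWithinAt
  -- injectivity
  have hinj : InjOn f (Ioo a b) := by
    rcases hsign with hpos | hneg
    · exact (strictMonoOn_of_deriv_pos (convex_Ioo a b) hfc (fun t ht => by
        rw [(hderiv t (interior_subset ht)).deriv]
        exact hpos t (interior_subset ht))).injOn
    · exact (strictAntiOn_of_deriv_neg (convex_Ioo a b) hfc (fun t ht => by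
        rw [(hderiv t (interior_subset ht)).deriv]
        exact hneg t (interior_subset ht))).injOn
  have key := integral_image_eq_integral_abs_deriv_smul measurableSet_Ioo hd' hinj
    ((Icc (x - δ) (x + δ)).indicator (fun _ => (1:ℝ)))
  have heq : ∀ t, (if |f t - x| ≤ δ then |g t| else 0)
      = |g t| • (Icc (x - δ) (x + δ)).indicator (fun _ => (1:ℝ)) (f t) := by
    intro t
    by_cases h : |f t - x| ≤ δ
    · rw [if_pos h, indicator_of_mem (by rw [mem_Icc]; constructor <;> linarith [abs_le.1 h] ) ]
      simp
    · rw [if_neg h, indicator_of_notMem, smul_zero]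
      rw [mem_Icc]
      intro ⟨h1, h2⟩
      exact h (abs_le.2 ⟨by linarith, by linarith⟩)
  calc ∫ t in Ioo a b, (if |f t - x| ≤ δ then |g t| else 0)
      = ∫ t in Ioo a b, |g t| • (Icc (x - δ) (x + δ)).indicator (fun _ => (1:ℝ)) (f t) := by
        simp_rw [heq]
    _ = ∫ y in f '' Ioo a b, (Icc (x - δ) (x + δ)).indicator (fun _ => (1:ℝ)) y := key.symm
    _ = ∫ y in f '' Ioo a b ∩ Icc (x - δ) (x + δ), (1:ℝ) := by
        rw [setIntegral_indicator measurableSet_Icc]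
    _ = (volume (f '' Ioo a b ∩ Icc (x - δ) (x + δ))).toReal := by
        rw [setIntegral_const, smul_eq_mul, mul_one, measureReal_def]
    _ ≤ (volume (Icc (x - δ) (x + δ))).toReal := by
        apply ENNReal.toReal_mono
        · simp [Real.volume_Icc]
        · exact measure_mono inter_subset_right
    _ = 2 * δ := by
        rw [Real.volume_Icc, ENNReal.toReal_ofReal (by linarith)]
        ring

lemma integ_piece (A B a b δ x : ℝ) (f g : ℝ → ℝ)
    (hg : ContinuousOn g (Icc A B))
    (hd : ∀ t ∈ Icc A B, HasDerivWithinAt f (g t) (Icc A B) t)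
    (hAa : A ≤ a) (hbB : b ≤ B) :
    IntegrableOn (fun t => if |f t - x| ≤ δ then |g t| else 0) (Ioo a b) := by
  rcases le_or_gt b a with h | hab
  · rw [Ioo_eq_empty (fun h' => absurd h (not_le.2 h'))]
    exact integrableOn_empty
  have hsub : Ioo a b ⊆ Icc A B := fun t ht => ⟨hAa.trans ht.1.le, ht.2.le.trans hbB⟩
  have hfc : ContinuousOn f (Ioo a b) := fun t ht =>
    ((hd t (hsub ht)).mono hsub).continuousWithinAt
  have hgc : ContinuousOn g (Ioo a b) := hg.mono hsub
  have hfm : AEMeasurable f (volume.restrict (Ioo a b)) :=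
    hfc.aemeasurable measurableSet_Ioo
  have hgm : AEMeasurable g (volume.restrict (Ioo a b)) :=
    hgc.aemeasurable measurableSet_Ioo
  have hmeas : AEStronglyMeasurable (fun t => if |f t - x| ≤ δ then |g t| else 0)
      (volume.restrict (Ioo a b)) := by
    have h1 : Measurable ((Icc (x - δ) (x + δ)).indicator (fun _ => (1:ℝ))) :=
      measurable_const.indicator measurableSet_Icc
    have h2 : AEMeasurable (fun t => |g t| * (Icc (x - δ) (x + δ)).indicator
        (fun _ => (1:ℝ)) (f t)) (volume.restrict (Ioo a b)) :=
      (measurable_abs.comp_aemeasurable hgm).mul (h1.comp_aemeasurable hfm)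
    refine (h2.congr ?_).aestronglyMeasurable
    filter_upwards with t
    by_cases h : |f t - x| ≤ δ
    · rw [indicator_of_mem (by rw [mem_Icc]; constructor <;> linarith [abs_le.1 h]), mul_one,
        if_pos h]
    · rw [indicator_of_notMem, mul_zero, if_neg h]
      rw [mem_Icc]
      intro hm
      exact h (abs_le.2 ⟨by linarith [hm.1], by linarith [hm.2]⟩)
  refine Integrable.mono' (g := fun t => |g t|)
    (((hg.mono (Icc_subset_Icc hAa hbB)).abs.integrableOn_Icc).mono_set Ioo_subset_Icc_self)
    hmeas ?_
  filter_upwards with t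
  by_cases h : |f t - x| ≤ δ <;> simp [h, abs_nonneg]

lemma key_ind (A B δ x : ℝ) (hδ : 0 < δ) (f g : ℝ → ℝ)
    (hg : ContinuousOn g (Icc A B))
    (hd : ∀ t ∈ Icc A B, HasDerivWithinAt f (g t) (Icc A B) t) :
    ∀ n : ℕ, ∀ a b : ℝ, A ≤ a → b ≤ B →
      {t ∈ Ioo a b | g t = 0}.Finite → {t ∈ Ioo a b | g t = 0}.ncard ≤ n →
      ∫ t in Ioo a b, (if |f t - x| ≤ δ then |g t| else 0)
        ≤ 2 * δ * ({t ∈ Ioo a b | g t = 0}.ncard + 1) := by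
  intro n
  induction n with
  | zero =>
    intro a b hAa hbB hfin hcard
    have hz : ∀ t ∈ Ioo a b, g t ≠ 0 := by
      intro t ht h0
      have : t ∈ {t ∈ Ioo a b | g t = 0} := ⟨ht, h0⟩
      rw [(ncard_eq_zero hfin).1 (Nat.le_zero.1 hcard)] at this
      exact this
    calc ∫ t in Ioo a b, (if |f t - x| ≤ δ then |g t| else 0)
        ≤ 2 * δ := mono_piece A B a b δ x hδ f g hg hd hAa hbB hz
      _ ≤ 2 * δ * ({t ∈ Ioo a b | g t = 0}.ncard + 1) := by nlinarith [Nat.cast_nonneg (α := ℝ) {t ∈ Ioo a b | g t = 0}.ncard]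
  | succ n ih =>
    intro a b hAa hbB hfin hcard
    by_cases hz : ∀ t ∈ Ioo a b, g t ≠ 0
    · calc ∫ t in Ioo a b, (if |f t - x| ≤ δ then |g t| else 0)
          ≤ 2 * δ := mono_piece A B a b δ x hδ f g hg hd hAa hbB hz
        _ ≤ 2 * δ * ({t ∈ Ioo a b | g t = 0}.ncard + 1) := by nlinarith [Nat.cast_nonneg (α := ℝ) {t ∈ Ioo a b | g t = 0}.ncard]
    push_neg at hz
    obtain ⟨c, hc, hc0⟩ := hz
    have hac : a < c := hc.1
    have hcb : c < b := hc.2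
    -- split the zero sets
    have hsub1 : {t ∈ Ioo a c | g t = 0} ⊆ {t ∈ Ioo a b | g t = 0} :=
      fun t ht => ⟨⟨ht.1.1, ht.1.2.trans hcb⟩, ht.2⟩
    have hsub2 : {t ∈ Ioo c b | g t = 0} ⊆ {t ∈ Ioo a b | g t = 0} :=
      fun t ht => ⟨⟨hac.trans ht.1.1, ht.1.2⟩, ht.2⟩
    have hfin1 := hfin.subset hsub1
    have hfin2 := hfin.subset hsub2
    have hdisj : Disjoint ({t ∈ Ioo a c | g t = 0} ∪ {c})
        {t ∈ Ioo c b | g t = 0} := by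
      rw [disjoint_left]
      rintro t (ht | ht) ht2
      · exact absurd (ht.1.2.trans ht2.1.1) (lt_irrefl t)
      · rw [mem_singleton_iff] at ht; subst ht; exact absurd ht2.1.1 (lt_irrefl t)
    have hdisj2 : Disjoint {t ∈ Ioo a c | g t = 0} ({c} : Set ℝ) := by
      rw [disjoint_left]
      rintro t ht ht2
      rw [mem_singleton_iff] at ht2; subst ht2
      exact absurd ht.1.2 (lt_irrefl t)
    have hunion : {t ∈ Ioo a c | g t = 0} ∪ {c} ∪ {t ∈ Ioo c b | g t = 0}
        ⊆ {t ∈ Ioo a b | g t = 0} := by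
      rintro t ((ht | ht) | ht)
      · exact hsub1 ht
      · rw [mem_singleton_iff] at ht; subst ht; exact ⟨hc, hc0⟩
      · exact hsub2 ht
    have hcount : {t ∈ Ioo a c | g t = 0}.ncard + 1 + {t ∈ Ioo c b | g t = 0}.ncard
        ≤ {t ∈ Ioo a b | g t = 0}.ncard := by
      have h1 := ncard_union_eq hdisj (hfin1.union (finite_singleton c)) hfin2
      have h2 := ncard_union_eq hdisj2 hfin1 (finite_singleton c)
      have h3 := ncard_le_ncard hunion hfin
      rw [h1, h2] at h3
      simpa using h3
    have hn1 : {t ∈ Ioo a c | g t = 0}.ncard ≤ n := by omega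
    have hn2 : {t ∈ Ioo c b | g t = 0}.ncard ≤ n := by omega
    have i1 := ih a c hAa (hcb.le.trans hbB) hfin1 hn1
    have i2 := ih c b (hAa.trans hac.le) hbB hfin2 hn2
    have hintg := integ_piece A B a b δ x f g hg hd hAa hbB
    have hsplit : ∫ t in Ioo a b, (if |f t - x| ≤ δ then |g t| else 0)
        = (∫ t in Ioo a c, (if |f t - x| ≤ δ then |g t| else 0))
          + ∫ t in Ioo c b, (if |f t - x| ≤ δ then |g t| else 0) := by
      rw [← Ioo_union_Ico_eq_Ioo hac hcb.le,
        setIntegral_union (by rw [disjoint_left]; intro t ht ht2; exact absurd ht.2 (not_lt.2 ht2.1))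
          measurableSet_Ico
          (hintg.mono_set (Ioo_subset_Ioo_right hcb.le))
          (hintg.mono_set (fun t ht => ⟨hac.trans_le ht.1, ht.2⟩)),
        integral_Ico_eq_integral_Ioo]
    rw [hsplit]
    have hcast := hcount
    have : ({t ∈ Ioo a c | g t = 0}.ncard : ℝ) + 1 + {t ∈ Ioo c b | g t = 0}.ncard
        ≤ ({t ∈ Ioo a b | g t = 0}.ncard : ℝ) := by exact_mod_cast hcast
    nlinarith

theorem kac_integral_bound (a b δ x : ℝ) (hab : a ≤ b) (hδ : 0 < δ) (f : ℝ → ℝ)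
    (hf : ContDiffOn ℝ 1 f (Icc a b))
    (hfin : {t ∈ Icc a b | derivWithin f (Icc a b) t = 0}.Finite) :
    (1 / (2 * δ)) * (∫ t in a..b, if |f t - x| ≤ δ then |derivWithin f (Icc a b) t| else 0)
      ≤ ({t ∈ Icc a b | derivWithin f (Icc a b) t = 0}.ncard : ℝ) + 1 := by
  set g := derivWithin f (Icc a b) with hgdef
  rcases eq_or_lt_of_le hab with rfl | hab'
  · rw [intervalIntegral.integral_same, mul_zero]
    positivity
  have hgc : ContinuousOn g (Icc a b) :=
    hf.continuousOn_derivWithin (uniqueDiffOn_Icc hab') le_rfl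
  have hd : ∀ t ∈ Icc a b, HasDerivWithinAt f (g t) (Icc a b) t :=
    fun t ht => ((hf.differentiableOn one_ne_zero) t ht).hasDerivWithinAt
  have hfinIoo : {t ∈ Ioo a b | g t = 0}.Finite :=
    hfin.subset (fun t ht => ⟨Ioo_subset_Icc_self ht.1, ht.2⟩)
  have key := key_ind a b δ x hδ f g hgc hd ({t ∈ Ioo a b | g t = 0}.ncard) a b
    le_rfl le_rfl hfinIoo le_rfl
  have heq : (∫ t in a..b, if |f t - x| ≤ δ then |g t| else 0)
      = ∫ t in Ioo a b, (if |f t - x| ≤ δ then |g t| else 0) := by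
    rw [intervalIntegral.integral_of_le hab, ← integral_Ioc_eq_integral_Ioo]
  have hle : ({t ∈ Ioo a b | g t = 0}.ncard : ℝ) ≤ {t ∈ Icc a b | g t = 0}.ncard := by
    have : {t ∈ Ioo a b | g t = 0}.ncard ≤ {t ∈ Icc a b | g t = 0}.ncard :=
      ncard_le_ncard (fun t ht => mem_sep (Ioo_subset_Icc_self ht.1) ht.2) hfin
    exact_mod_cast this
  rw [heq]
  rw [div_mul_eq_mul_div, one_mul, div_le_iff₀ (by positivity)]
  calc ∫ t in Ioo a b, (if |f t - x| ≤ δ then |g t| else 0)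
      ≤ 2 * δ * ({t ∈ Ioo a b | g t = 0}.ncard + 1) := key
    _ ≤ (({t ∈ Icc a b | g t = 0}.ncard : ℝ) + 1) * (2 * δ) := by nlinarith
end

section
/- Let μ be a probability measure on ℝ² with finite second moments and let ψ(u,v) = ∫ e^{i(ux+vy)} dμ(x,y) be its characteristic function. Then for every u ∈ ℝ, lim_{A→∞} −(1/π) ∫_0^A (1/v)(∂ψ/∂v(u,v) − ∂ψ/∂v(u,−v)) dv = ∫_{ℝ²} |y| e^{iux} dμ(x,y). -/
open MeasureTheory Filter Topology

/-- Joint characteristic function of a measure on `ℝ²`. -/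
noncomputable def jointCharFun (μ : Measure (ℝ × ℝ)) (u v : ℝ) : ℂ :=
  ∫ p, Complex.exp (Complex.I * ((u * p.1 + v * p.2 : ℝ) : ℂ)) ∂μ

section Aux

open Set Real

noncomputable def SinInt (A : ℝ) : ℝ := ∫ t in (0:ℝ)..A, Real.sin t / t

lemma expSinPrim (v : ℝ) (A : ℝ) :
    ∫ t in (0:ℝ)..A, Real.exp (-(t*v)) * Real.sin t
      = (1 - Real.exp (-(A*v)) * (Real.cos A + v * Real.sin A)) / (1 + v^2) := by
  have h1 : (0:ℝ) < 1 + v^2 := by positivity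
  have key : ∀ t : ℝ, HasDerivAt (fun t => -(Real.exp (-(t*v)) * (Real.cos t + v * Real.sin t)) / (1 + v^2))
      (Real.exp (-(t*v)) * Real.sin t) t := by
    intro t
    have he : HasDerivAt (fun t : ℝ => Real.exp (-(t*v))) (-v * Real.exp (-(t*v))) t := by
      have : HasDerivAt (fun t : ℝ => -(t*v)) (-v) t := by
        have h := ((hasDerivAt_id t).mul_const v).neg
        simp only [id, one_mul] at h
        exact h
      simpa [mul_comm] using this.exp
    have hc : HasDerivAt (fun t : ℝ => Real.cos t + v * Real.sin t)
        (-Real.sin t + v * Real.cos t) t :=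
      (Real.hasDerivAt_cos t).add ((Real.hasDerivAt_sin t).const_mul v)
    have := ((he.mul hc).neg.div_const (1 + v^2))
    refine this.congr_deriv ?_
    rw [div_eq_iff h1.ne']
    ring
  rw [intervalIntegral.integral_eq_sub_of_hasDerivAt (fun t _ => key t)]
  · simp
    field_simp
    ring
  · apply Continuous.intervalIntegrable
    continuity

lemma inner_exp_integral {t : ℝ} (ht : 0 < t) :
    ∫ v in Ioi (0:ℝ), Real.exp (-(t*v)) = t⁻¹ := by
  have := integral_comp_mul_left_Ioi (fun x => Real.exp (-x)) 0 ht
  simp only [mul_zero, smul_eq_mul] at this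
  rw [this, integral_exp_neg_Ioi_zero, mul_one]

lemma sinInt_eq (A : ℝ) (hA : 0 ≤ A) :
    SinInt A = ∫ v in Ioi (0:ℝ),
      (1 - Real.exp (-(A*v)) * (Real.cos A + v * Real.sin A)) / (1 + v^2) := by
  have hmeas : AEStronglyMeasurable (Function.uncurry fun t v => Real.exp (-(t*v)) * Real.sin t)
      ((volume.restrict (Ioc 0 A)).prod (volume.restrict (Ioi 0))) := by
    apply Continuous.aestronglyMeasurable
    fun_prop
  have hint : Integrable (Function.uncurry fun t v => Real.exp (-(t*v)) * Real.sin t)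
      ((volume.restrict (Ioc 0 A)).prod (volume.restrict (Ioi 0))) := by
    rw [integrable_prod_iff hmeas]
    constructor
    · filter_upwards [ae_restrict_mem measurableSet_Ioc] with t ht
      have : Integrable (fun v => Real.exp (-(t*v))) (volume.restrict (Ioi 0)) := by
        have := exp_neg_integrableOn_Ioi 0 ht.1
        simpa [neg_mul] using this.integrable
      simpa [mul_comm] using this.mul_const (Real.sin t)
    · have hbd : ∀ᵐ t ∂(volume.restrict (Ioc 0 A)),
          ‖∫ v in Ioi (0:ℝ), ‖Real.exp (-(t*v)) * Real.sin t‖‖ ≤ 1 := by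
        filter_upwards [ae_restrict_mem measurableSet_Ioc] with t ht
        have hcalc : ∫ v in Ioi (0:ℝ), ‖Real.exp (-(t*v)) * Real.sin t‖
            = |Real.sin t| * t⁻¹ := by
          have h2 : ∀ v : ℝ, ‖Real.exp (-(t*v)) * Real.sin t‖
              = |Real.sin t| * Real.exp (-(t*v)) := by
            intro v
            rw [norm_mul, Real.norm_eq_abs, Real.norm_eq_abs, abs_of_pos (Real.exp_pos _)]
            ring
          simp_rw [h2]
          rw [integral_const_mul, inner_exp_integral ht.1]
        rw [hcalc, Real.norm_eq_abs,
          abs_of_nonneg (mul_nonneg (abs_nonneg _) (inv_nonneg.2 ht.1.le)),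
          ← div_eq_mul_inv, div_le_one ht.1]
        exact Real.abs_sin_le_abs.trans_eq (abs_of_pos ht.1)
      exact (integrable_const 1).mono' hmeas.norm.integral_prod_right' hbd
  have step1 : SinInt A = ∫ t in Ioc (0:ℝ) A, ∫ v in Ioi (0:ℝ),
      Real.exp (-(t*v)) * Real.sin t := by
    rw [SinInt, intervalIntegral.integral_of_le hA]
    apply setIntegral_congr_fun measurableSet_Ioc
    intro t ht
    dsimp only
    rw [integral_mul_const, inner_exp_integral ht.1, div_eq_mul_inv, mul_comm]
  rw [step1, integral_integral_swap hint]
  apply setIntegral_congr_fun measurableSet_Ioi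
  intro v _
  dsimp only
  rw [← intervalIntegral.integral_of_le hA, expSinPrim]
lemma tendsto_sinInt : Tendsto SinInt atTop (𝓝 (π/2)) := by
  have key : Tendsto (fun A => ∫ v in Ioi (0:ℝ),
      (1 - Real.exp (-(A*v)) * (Real.cos A + v * Real.sin A)) / (1 + v^2))
      atTop (𝓝 (π/2)) := by
    have hlim : ∫ v in Ioi (0:ℝ), (1 + v^2)⁻¹ = π/2 := by
      rw [integral_Ioi_inv_one_add_sq]; simp
    rw [← hlim]
    apply tendsto_integral_filter_of_dominated_convergence
      (fun v => (1 + v^2)⁻¹ + 2 * Real.exp (-v))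
    · filter_upwards with A
      apply Continuous.aestronglyMeasurable
      fun_prop (disch := intro v; positivity)
    · filter_upwards [eventually_ge_atTop (1:ℝ)] with A hA
      filter_upwards [ae_restrict_mem measurableSet_Ioi] with v hv
      have h1 : (0:ℝ) < 1 + v^2 := by positivity
      rw [Real.norm_eq_abs, abs_div, abs_of_pos h1, div_le_iff₀ h1]
      have hbd : |1 - Real.exp (-(A*v)) * (Real.cos A + v * Real.sin A)|
          ≤ 1 + Real.exp (-v) * (1 + v) := by
        calc |1 - Real.exp (-(A*v)) * (Real.cos A + v * Real.sin A)|
            ≤ 1 + Real.exp (-(A*v)) * |Real.cos A + v * Real.sin A| := by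
              refine (abs_sub _ _).trans ?_
              simp [abs_of_pos (Real.exp_pos _), abs_mul]
          _ ≤ 1 + Real.exp (-v) * (1 + v) := by
              gcongr
              · nlinarith [hv.out]
              · calc |Real.cos A + v * Real.sin A| ≤ |Real.cos A| + |v * Real.sin A| := abs_add_le _ _
                  _ ≤ 1 + v := by
                    have := Real.abs_cos_le_one A
                    have := Real.abs_sin_le_one A
                    rw [abs_mul, abs_of_pos hv.out]
                    nlinarith [hv.out]
      calc |1 - Real.exp (-(A*v)) * (Real.cos A + v * Real.sin A)|
          ≤ 1 + Real.exp (-v) * (1 + v) := hbd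
        _ ≤ ((1 + v^2)⁻¹ + 2 * Real.exp (-v)) * (1 + v^2) := by
            have h2 : (1:ℝ) + v ≤ 2 * (1 + v^2) := by nlinarith [hv.out]
            have := Real.exp_pos (-v)
            rw [add_mul, inv_mul_cancel₀ h1.ne']
            nlinarith
    · apply Integrable.add
      · exact integrable_inv_one_add_sq.integrableOn
      · have := exp_neg_integrableOn_Ioi 0 (zero_lt_one)
        simpa [neg_mul] using this.const_mul 2
    · filter_upwards [ae_restrict_mem measurableSet_Ioi] with v hv
      have h1 : (0:ℝ) < 1 + v^2 := by positivity
      have hz : Tendsto (fun A => Real.exp (-(A*v)) * (Real.cos A + v * Real.sin A))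
          atTop (𝓝 0) := by
        apply squeeze_zero_norm (a := fun A => Real.exp (-(A*v)) * (1 + v))
        · intro A
          rw [norm_mul, Real.norm_eq_abs, Real.norm_eq_abs, abs_of_pos (Real.exp_pos _)]
          gcongr
          calc |Real.cos A + v * Real.sin A| ≤ |Real.cos A| + |v * Real.sin A| := abs_add_le _ _
            _ ≤ 1 + v := by
              have := Real.abs_cos_le_one A
              have := Real.abs_sin_le_one A
              rw [abs_mul, abs_of_pos hv.out]
              nlinarith [hv.out]
        · have h3 : Tendsto (fun A : ℝ => -(A*v)) atTop atBot := by
            have := (tendsto_id (α := ℝ) (x := atTop)).atTop_mul_const_of_neg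
              (neg_neg_iff_pos.2 hv.out : -v < 0)
            simpa [mul_comm, mul_neg] using this
          have h4 : Tendsto (fun A : ℝ => Real.exp (-(A*v))) atTop (𝓝 0) :=
            Real.tendsto_exp_atBot.comp h3
          simpa using h4.mul_const (1 + v)
      have : Tendsto (fun A => (1 - Real.exp (-(A*v)) * (Real.cos A + v * Real.sin A)) / (1 + v^2))
          atTop (𝓝 ((1 - 0) / (1 + v^2))) := by
        exact ((tendsto_const_nhds.sub hz).div_const _)
      simpa using this
  apply key.congr'
  filter_upwards [eventually_ge_atTop (0:ℝ)] with A hA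
  rw [sinInt_eq A hA]
lemma sinInt_intervalIntegrable (a b : ℝ) :
    IntervalIntegrable (fun t => Real.sin t / t) volume a b := by
  apply intervalIntegrable_const (c := (1:ℝ)).mono_fun
  · apply Measurable.aestronglyMeasurable
    measurability
  · filter_upwards with t
    rw [Real.norm_eq_abs, norm_one, abs_div]
    rcases eq_or_ne t 0 with h | h
    · simp [h]
    · rw [div_le_one (abs_pos.2 h)]
      exact Real.abs_sin_le_abs

lemma continuous_sinInt : Continuous SinInt :=
  intervalIntegral.continuous_primitive sinInt_intervalIntegrable 0

lemma sinInt_neg (A : ℝ) : SinInt (-A) = - SinInt A := by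
  unfold SinInt
  have heven : ∀ x : ℝ, Real.sin (-x) / (-x) = Real.sin x / x := by
    intro x; rw [Real.sin_neg, neg_div_neg_eq]
  have h := intervalIntegral.integral_comp_neg (a := A) (b := 0) (fun t => Real.sin t / t)
  simp only [neg_zero] at h
  simp_rw [heven] at h
  rw [← h, intervalIntegral.integral_symm]

lemma sinInt_bound : ∃ C : ℝ, ∀ T : ℝ, |SinInt T| ≤ C := by
  obtain ⟨N, hN⟩ := Metric.tendsto_atTop.mp tendsto_sinInt 1 one_pos
  set N' : ℝ := max N 0 with hN'
  obtain ⟨C, hC⟩ := (isCompact_Icc (a := -N') (b := N')).exists_bound_of_continuousOn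
    continuous_sinInt.continuousOn
  have htail : ∀ T : ℝ, N' ≤ T → |SinInt T| ≤ |π/2| + 1 := by
    intro T hT
    have := hN T (le_trans (le_max_left _ _) hT)
    rw [Real.dist_eq] at this
    calc |SinInt T| = |(SinInt T - π/2) + π/2| := by ring_nf
      _ ≤ |SinInt T - π/2| + |π/2| := abs_add_le _ _
      _ ≤ |π/2| + 1 := by linarith
  refine ⟨max C (|π/2| + 1), fun T => ?_⟩
  rcases le_total T N' with h1 | h1
  · rcases le_total (-N') T with h2 | h2
    · exact le_max_of_le_left (by simpa using hC T ⟨h2, h1⟩)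
    · have : N' ≤ -T := by linarith
      have := htail (-T) this
      rw [sinInt_neg, abs_neg] at this
      exact le_max_of_le_right this
  · exact le_max_of_le_right (htail T h1)

lemma tendsto_sinInt_atBot : Tendsto SinInt atBot (𝓝 (-(π/2))) := by
  have h1 := tendsto_sinInt.comp tendsto_neg_atBot_atTop
  have h2 : (SinInt ∘ fun A : ℝ => -A) = fun A => - SinInt A := by
    funext A; simp [Function.comp, sinInt_neg]
  rw [h2] at h1
  simpa using h1.neg
lemma inner_real_integral (A y : ℝ) :
    ∫ v in (0:ℝ)..A, y * Real.sin (v*y) / v = y * SinInt (A*y) := by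
  rcases eq_or_ne y 0 with hy | hy
  · simp [hy]
  have hEq : ∀ v : ℝ, y * Real.sin (v*y) / v = ((fun t => Real.sin t / t) (v*y)) * y^2 := by
    intro v
    rcases eq_or_ne v 0 with hv | hv
    · simp [hv]
    · dsimp only; field_simp
  simp_rw [hEq]
  rw [intervalIntegral.integral_mul_const]
  have h := intervalIntegral.integral_comp_mul_right (f := fun t => Real.sin t / t)
    (a := 0) (b := A) hy
  beta_reduce at h
  rw [h]
  simp only [zero_mul, smul_eq_mul]
  rw [← SinInt]
  field_simp

lemma cexp_identity (u v : ℝ) (p : ℝ × ℝ) :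
    (1 / (v:ℂ)) * ((Complex.I * p.2) * Complex.exp (Complex.I * ((u * p.1 + v * p.2 : ℝ) : ℂ))
        - (Complex.I * p.2) * Complex.exp (Complex.I * ((u * p.1 + (-v) * p.2 : ℝ) : ℂ)))
      = ((-2 * (p.2 * Real.sin (v * p.2) / v) : ℝ) : ℂ)
          * Complex.exp (Complex.I * ((u * p.1 : ℝ) : ℂ)) := by
  rcases eq_or_ne v 0 with hv | hv
  · simp [hv]
  have hvc : (v:ℂ) ≠ 0 := Complex.ofReal_ne_zero.2 hv
  set a : ℝ := u * p.1
  set b : ℝ := v * p.2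
  have e1 : Complex.exp (Complex.I * ((u * p.1 + v * p.2 : ℝ) : ℂ))
      = Complex.exp (Complex.I * (a:ℂ)) * Complex.exp (Complex.I * (b:ℂ)) := by
    rw [← Complex.exp_add]; congr 1; push_cast [a, b]; ring
  have e2 : Complex.exp (Complex.I * ((u * p.1 + (-v) * p.2 : ℝ) : ℂ))
      = Complex.exp (Complex.I * (a:ℂ)) * Complex.exp (-(Complex.I * (b:ℂ))) := by
    rw [← Complex.exp_add]; congr 1; push_cast [a, b]; ring
  have hsin : Complex.exp (Complex.I * (b:ℂ)) - Complex.exp (-(Complex.I * (b:ℂ)))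
      = 2 * Complex.I * Complex.sin (b:ℂ) := by
    rw [Complex.sin]
    have h := Complex.I_sq
    have h2 : -(b:ℂ) * Complex.I = -(Complex.I * (b:ℂ)) := by ring
    have h3 : (b:ℂ) * Complex.I = Complex.I * (b:ℂ) := by ring
    rw [h2, h3]
    linear_combination (Complex.exp (Complex.I * (b:ℂ)) - Complex.exp (-(Complex.I * (b:ℂ)))) * h
  have hsin' : ((Real.sin (v * p.2) : ℝ) : ℂ) = Complex.sin (b:ℂ) := by
    rw [← Complex.ofReal_sin]
  rw [e1, e2]
  push_cast [hsin']
  have hI := Complex.I_sq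
  field_simp
  linear_combination (Complex.I * (p.2:ℂ)) * hsin +
    (2 * (p.2:ℂ) * Complex.sin (b:ℂ)) * hI

variable {μ : Measure (ℝ × ℝ)} [IsProbabilityMeasure μ]

lemma norm_cexp_I_real (x : ℝ) : ‖Complex.exp (Complex.I * (x : ℂ))‖ = 1 := by
  rw [Complex.norm_exp]
  simp

lemma abs_snd_integrable (hmom : Integrable (fun p : ℝ × ℝ => ‖p‖ ^ 2) μ) :
    Integrable (fun p : ℝ × ℝ => |p.2|) μ := by
  have : Integrable (fun p : ℝ × ℝ => 1 + ‖p‖ ^ 2) μ := (integrable_const 1).add hmom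
  apply this.mono'
  · apply Measurable.aestronglyMeasurable; measurability
  · filter_upwards with p
    rw [Real.norm_eq_abs, abs_abs]
    have h1 : |p.2| ≤ ‖p‖ := (Real.norm_eq_abs p.2) ▸ norm_snd_le p
    nlinarith [norm_nonneg p]

lemma sq_snd_integrable (hmom : Integrable (fun p : ℝ × ℝ => ‖p‖ ^ 2) μ) :
    Integrable (fun p : ℝ × ℝ => p.2 ^ 2) μ := by
  apply hmom.mono'
  · apply Measurable.aestronglyMeasurable; measurability
  · filter_upwards with p
    have h1 : |p.2| ≤ ‖p‖ := (Real.norm_eq_abs p.2) ▸ norm_snd_le p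
    rw [Real.norm_eq_abs, abs_of_nonneg (sq_nonneg _)]
    nlinarith [sq_abs p.2, abs_nonneg p.2]

lemma hasDerivAt_jointCharFun (hmom : Integrable (fun p : ℝ × ℝ => ‖p‖ ^ 2) μ) (u v : ℝ) :
    HasDerivAt (fun w : ℝ => jointCharFun μ u w)
      (∫ p, (Complex.I * p.2) * Complex.exp (Complex.I * ((u * p.1 + v * p.2 : ℝ) : ℂ)) ∂μ) v := by
  have key := hasDerivAt_integral_of_dominated_loc_of_deriv_le (μ := μ)
    (F := fun w (p : ℝ × ℝ) => Complex.exp (Complex.I * ((u * p.1 + w * p.2 : ℝ) : ℂ)))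
    (F' := fun w (p : ℝ × ℝ) => (Complex.I * p.2) * Complex.exp (Complex.I * ((u * p.1 + w * p.2 : ℝ) : ℂ)))
    (x₀ := v) (bound := fun p => |p.2|) (s := Metric.ball v 1) (Metric.ball_mem_nhds v one_pos) ?_ ?_ ?_ ?_ ?_ ?_
  · exact key.2
  · filter_upwards with w
    apply Continuous.aestronglyMeasurable; fun_prop
  · apply (integrable_const (1:ℝ)).mono'
    · apply Continuous.aestronglyMeasurable; fun_prop
    · filter_upwards with p
      have := norm_cexp_I_real (u * p.1 + v * p.2)
      push_cast at this
      simp [this]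
  · apply Continuous.aestronglyMeasurable; fun_prop
  · filter_upwards with p w _
    rw [norm_mul, norm_mul, norm_cexp_I_real, Complex.norm_I,
      Complex.norm_real, Real.norm_eq_abs]
    simp
  · exact abs_snd_integrable hmom
  · filter_upwards with p w _
    have h1 : HasDerivAt (fun w : ℝ => Complex.I * ((u * p.1 + w * p.2 : ℝ) : ℂ))
        (Complex.I * p.2) w := by
      have h2 : (fun w : ℝ => Complex.I * ((u * p.1 + w * p.2 : ℝ) : ℂ))
          = fun w : ℝ => (Complex.I * (u * p.1) : ℂ) + (Complex.I * p.2) * (w : ℂ) := by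
        funext w; push_cast; ring
      rw [h2]
      have h3 : HasDerivAt (fun w : ℝ => ((w : ℝ) : ℂ)) 1 w := by
        exact Complex.ofRealCLM.hasDerivAt (x := w)
      simpa using (h3.const_mul (Complex.I * p.2)).const_add (Complex.I * (u * p.1) : ℂ)
    simpa [mul_comm] using h1.cexp

lemma Fprime_integrable (hmom : Integrable (fun p : ℝ × ℝ => ‖p‖ ^ 2) μ) (u v : ℝ) :
    Integrable (fun p : ℝ × ℝ =>
      (Complex.I * p.2) * Complex.exp (Complex.I * ((u * p.1 + v * p.2 : ℝ) : ℂ))) μ := by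
  apply (abs_snd_integrable hmom).mono'
  · apply Continuous.aestronglyMeasurable; fun_prop
  · filter_upwards with p
    rw [norm_mul, norm_mul, norm_cexp_I_real, Complex.norm_I,
      Complex.norm_real, Real.norm_eq_abs]
    simp

lemma key_fubini (hmom : Integrable (fun p : ℝ × ℝ => ‖p‖ ^ 2) μ) (u A : ℝ) (hA : 0 ≤ A) :
    ∫ v in (0:ℝ)..A, ∫ p, ((-2 * (p.2 * Real.sin (v * p.2) / v) : ℝ) : ℂ)
        * Complex.exp (Complex.I * ((u * p.1 : ℝ) : ℂ)) ∂μ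
      = ∫ p, ((-2 * (p.2 * SinInt (A * p.2)) : ℝ) : ℂ)
        * Complex.exp (Complex.I * ((u * p.1 : ℝ) : ℂ)) ∂μ := by
  have hnorm : ∀ (v : ℝ) (p : ℝ × ℝ),
      ‖((-2 * (p.2 * Real.sin (v * p.2) / v) : ℝ) : ℂ)
        * Complex.exp (Complex.I * ((u * p.1 : ℝ) : ℂ))‖
      = |(-2 * (p.2 * Real.sin (v * p.2) / v) : ℝ)| := by
    intro v p
    rw [norm_mul, norm_cexp_I_real, Complex.norm_real, Real.norm_eq_abs, mul_one]
  have hptbd : ∀ (v : ℝ) (p : ℝ × ℝ), 0 < v →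
      |(-2 * (p.2 * Real.sin (v * p.2) / v) : ℝ)| ≤ 2 * p.2^2 := by
    intro v p hv
    have h1 : |Real.sin (v * p.2)| ≤ v * |p.2| := by
      refine Real.abs_sin_le_abs.trans ?_
      rw [abs_mul, abs_of_pos hv]
    calc |(-2 * (p.2 * Real.sin (v * p.2) / v) : ℝ)|
        = 2 * (|p.2| * |Real.sin (v * p.2)| / v) := by
          rw [abs_mul, abs_div, abs_mul, abs_of_pos hv]; norm_num
      _ ≤ 2 * p.2^2 := by
          rw [mul_le_mul_iff_right₀ (by norm_num : (0:ℝ) < 2), div_le_iff₀ hv]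
          nlinarith [abs_nonneg p.2, sq_abs p.2]
  have hmeas : AEStronglyMeasurable
      (Function.uncurry fun (v : ℝ) (p : ℝ × ℝ) =>
        ((-2 * (p.2 * Real.sin (v * p.2) / v) : ℝ) : ℂ)
          * Complex.exp (Complex.I * ((u * p.1 : ℝ) : ℂ)))
      ((volume.restrict (Ioc 0 A)).prod μ) := by
    apply Measurable.aestronglyMeasurable
    simp only [Function.uncurry_def]
    fun_prop
  have hint : Integrable
      (Function.uncurry fun (v : ℝ) (p : ℝ × ℝ) =>
        ((-2 * (p.2 * Real.sin (v * p.2) / v) : ℝ) : ℂ)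
          * Complex.exp (Complex.I * ((u * p.1 : ℝ) : ℂ)))
      ((volume.restrict (Ioc 0 A)).prod μ) := by
    rw [integrable_prod_iff hmeas]
    constructor
    · filter_upwards [ae_restrict_mem measurableSet_Ioc] with v hv
      apply ((sq_snd_integrable hmom).const_mul 2).mono'
      · apply Measurable.aestronglyMeasurable
        fun_prop
      · filter_upwards with p
        rw [Function.uncurry_apply_pair, hnorm]
        simpa using hptbd v p hv.1
    · apply (integrable_const (∫ p, 2 * p.2^2 ∂μ)).mono'
        (hmeas.norm.integral_prod_right')
      filter_upwards [ae_restrict_mem measurableSet_Ioc] with v hv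
      rw [Real.norm_eq_abs, abs_of_nonneg (integral_nonneg (fun p => norm_nonneg _))]
      apply integral_mono_of_nonneg (by filter_upwards with p; exact norm_nonneg _)
        ((sq_snd_integrable hmom).const_mul 2)
      filter_upwards with p
      rw [Function.uncurry_apply_pair, hnorm]
      exact hptbd v p hv.1
  rw [intervalIntegral.integral_of_le hA, integral_integral_swap hint]
  apply integral_congr_ae
  filter_upwards with p
  rw [integral_mul_const]
  have : ∫ v in Ioc (0:ℝ) A, ((-2 * (p.2 * Real.sin (v * p.2) / v) : ℝ) : ℂ)
      = ((-2 * (p.2 * SinInt (A * p.2)) : ℝ) : ℂ) := by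
    rw [← intervalIntegral.integral_of_le hA (f := fun v => ((-2 * (p.2 * Real.sin (v * p.2) / v) : ℝ) : ℂ))]
    rw [intervalIntegral.integral_ofReal]
    norm_cast
    rw [intervalIntegral.integral_const_mul, inner_real_integral]
  rw [this]

end Aux

theorem charFun_deriv_limit (μ : Measure (ℝ × ℝ)) [IsProbabilityMeasure μ]
    (hmom : Integrable (fun p : ℝ × ℝ => ‖p‖ ^ 2) μ) (u : ℝ) :
    Tendsto (fun A : ℝ => -(1 / (Real.pi : ℂ)) *
        ∫ v in (0:ℝ)..A, (1 / (v : ℂ)) *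
          (deriv (fun w : ℝ => jointCharFun μ u w) v
            - deriv (fun w : ℝ => jointCharFun μ u w) (-v)))
      atTop
      (𝓝 (∫ p, ((|p.2| : ℝ) : ℂ) * Complex.exp (Complex.I * ((u * p.1 : ℝ) : ℂ)) ∂μ)) := by
  have hD : ∀ v : ℝ, deriv (fun w : ℝ => jointCharFun μ u w) v
      = ∫ p, (Complex.I * p.2) * Complex.exp (Complex.I * ((u * p.1 + v * p.2 : ℝ) : ℂ)) ∂μ :=
    fun v => (hasDerivAt_jointCharFun hmom u v).deriv
  have hv_eq : ∀ v : ℝ, (1 / (v:ℂ)) *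
      (deriv (fun w : ℝ => jointCharFun μ u w) v - deriv (fun w : ℝ => jointCharFun μ u w) (-v))
      = ∫ p, ((-2 * (p.2 * Real.sin (v * p.2) / v) : ℝ) : ℂ)
          * Complex.exp (Complex.I * ((u * p.1 : ℝ) : ℂ)) ∂μ := by
    intro v
    rw [hD v, hD (-v), ← integral_sub (Fprime_integrable hmom u v) (Fprime_integrable hmom u (-v)),
      ← integral_const_mul]
    exact integral_congr_ae (by filter_upwards with p; exact cexp_identity u v p)
  have main : Tendsto (fun A : ℝ => ∫ p, ((2 / Real.pi * (p.2 * SinInt (A * p.2)) : ℝ) : ℂ)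
      * Complex.exp (Complex.I * ((u * p.1 : ℝ) : ℂ)) ∂μ) atTop
      (𝓝 (∫ p, ((|p.2| : ℝ) : ℂ) * Complex.exp (Complex.I * ((u * p.1 : ℝ) : ℂ)) ∂μ)) := by
    obtain ⟨C, hC⟩ := sinInt_bound
    have hC0 : 0 ≤ C := (abs_nonneg _).trans (hC 0)
    apply tendsto_integral_filter_of_dominated_convergence
      (bound := fun p : ℝ × ℝ => 2 / Real.pi * C * |p.2|)
    · filter_upwards with A
      apply Continuous.aestronglyMeasurable
      apply Continuous.mul
      · apply Complex.continuous_ofReal.comp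
        exact (continuous_const.mul (continuous_snd.mul
          (continuous_sinInt.comp (continuous_const.mul continuous_snd))))
      · fun_prop
    · filter_upwards with A
      filter_upwards with p
      rw [norm_mul, norm_cexp_I_real, Complex.norm_real, Real.norm_eq_abs, mul_one,
        abs_mul, abs_mul]
      rw [abs_of_nonneg (by positivity : (0:ℝ) ≤ 2 / Real.pi)]
      have h2 : (0:ℝ) ≤ 2 / Real.pi := by positivity
      nlinarith [mul_nonneg (mul_nonneg h2 (abs_nonneg p.2))
        (sub_nonneg.2 (hC (A * p.2))), abs_nonneg p.2, hC (A * p.2),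
        abs_nonneg (SinInt (A * p.2))]
    · exact (abs_snd_integrable hmom).const_mul _
    · filter_upwards with p
      rcases lt_trichotomy p.2 0 with hy | hy | hy
      · have h1 : Tendsto (fun A : ℝ => A * p.2) atTop atBot :=
          Tendsto.atTop_mul_const_of_neg hy tendsto_id
        have h2 : Tendsto (fun A : ℝ => 2 / Real.pi * (p.2 * SinInt (A * p.2))) atTop
            (𝓝 (2 / Real.pi * (p.2 * -(Real.pi/2)))) :=
          (Tendsto.const_mul _ ((tendsto_sinInt_atBot.comp h1).const_mul _))
        have hone : 2 / Real.pi * (Real.pi / 2) = 1 := by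
          field_simp
        have h3 : 2 / Real.pi * (p.2 * -(Real.pi/2)) = |p.2| := by
          rw [abs_of_neg hy]; linear_combination (-p.2) * hone
        rw [h3] at h2
        exact ((Complex.continuous_ofReal.tendsto _).comp h2).mul_const _
      · rw [hy]
        simpa using tendsto_const_nhds
      · have h1 : Tendsto (fun A : ℝ => A * p.2) atTop atTop :=
          Tendsto.atTop_mul_const hy tendsto_id
        have h2 : Tendsto (fun A : ℝ => 2 / Real.pi * (p.2 * SinInt (A * p.2))) atTop
            (𝓝 (2 / Real.pi * (p.2 * (Real.pi/2)))) :=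
          (Tendsto.const_mul _ ((tendsto_sinInt.comp h1).const_mul _))
        have hone : 2 / Real.pi * (Real.pi / 2) = 1 := by
          field_simp
        have h3 : 2 / Real.pi * (p.2 * (Real.pi/2)) = |p.2| := by
          rw [abs_of_pos hy]; linear_combination p.2 * hone
        rw [h3] at h2
        exact ((Complex.continuous_ofReal.tendsto _).comp h2).mul_const _
  apply main.congr'
  filter_upwards [eventually_ge_atTop (0:ℝ)] with A hA
  have step1 : (∫ v in (0:ℝ)..A, (1 / (v:ℂ)) *
      (deriv (fun w : ℝ => jointCharFun μ u w) v - deriv (fun w : ℝ => jointCharFun μ u w) (-v)))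
      = ∫ p, ((-2 * (p.2 * SinInt (A * p.2)) : ℝ) : ℂ)
        * Complex.exp (Complex.I * ((u * p.1 : ℝ) : ℂ)) ∂μ := by
    rw [← key_fubini hmom u A hA]
    exact intervalIntegral.integral_congr (fun v _ => hv_eq v)
  rw [step1, ← integral_const_mul]
  apply integral_congr_ae
  filter_upwards with p
  have hpi : (Real.pi : ℂ) ≠ 0 := Complex.ofReal_ne_zero.2 Real.pi_ne_zero
  push_cast
  field_simp
end

section
/- Let μ be a probability measure on ℝ² with finite second moments and characteristic function ψ. Then for every u ∈ ℝ, lim_{A→∞} −(1/π) ∫_0^A (1/v²)(ψ(u,v) + ψ(u,−v) − 2ψ(u,0)) dv = ∫_{ℝ²} |y| e^{iux} dμ(x,y). -/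
open MeasureTheory Filter Topology

open Set

lemma expcos_integrable {s : ℝ} (hs : 0 < s) :
    IntegrableOn (fun x : ℝ => Real.exp (-(s * x)) * Real.cos x) (Ioi 0) := by
  refine (exp_neg_integrableOn_Ioi 0 hs).mono' ?_ ?_
  · exact (Continuous.mul (by continuity) Real.continuous_cos).aestronglyMeasurable
  · filter_upwards with x
    rw [Real.norm_eq_abs, abs_mul, Real.abs_exp, neg_mul]
    calc Real.exp (-(s*x)) * |Real.cos x| ≤ Real.exp (-(s*x)) * 1 := by
          gcongr; exact Real.abs_cos_le_one x
      _ = Real.exp (-(s*x)) := by ring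

lemma integral_expcos {s : ℝ} (hs : 0 < s) :
    ∫ x in Ioi (0:ℝ), Real.exp (-(s * x)) * Real.cos x = s / (1 + s ^ 2) := by
  have hne : (1 + s ^ 2) ≠ 0 := by positivity
  have hderiv : ∀ x ∈ Ici (0:ℝ), HasDerivAt
      (fun x => Real.exp (-(s * x)) * (Real.sin x - s * Real.cos x) / (1 + s ^ 2))
      (Real.exp (-(s * x)) * Real.cos x) x := by
    intro x _
    have h1 : HasDerivAt (fun x : ℝ => -(s * x)) (-s) x := by
      simpa using ((hasDerivAt_id x).const_mul (-s))
    have h2 := h1.exp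
    have h3 : HasDerivAt (fun x : ℝ => Real.sin x - s * Real.cos x)
        (Real.cos x + s * Real.sin x) x := by
      have h := (Real.hasDerivAt_sin x).sub ((Real.hasDerivAt_cos x).const_mul s)
      exact h.congr_deriv (by ring)
    have := (h2.mul h3).div_const (1 + s ^ 2)
    refine this.congr_deriv ?_
    rw [div_eq_iff hne]
    ring
  have htend : Tendsto (fun x => Real.exp (-(s * x)) * (Real.sin x - s * Real.cos x) / (1 + s ^ 2))
      atTop (𝓝 0) := by
    apply squeeze_zero_norm (a := fun x => Real.exp (-(s * x)) * ((1 + s) / (1 + s ^ 2)))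
    · intro x
      rw [Real.norm_eq_abs, abs_div, abs_of_pos (by positivity : (0:ℝ) < 1 + s ^ 2), abs_mul,
        Real.abs_exp, mul_div_assoc]
      gcongr
      calc |Real.sin x - s * Real.cos x| ≤ |Real.sin x| + |s * Real.cos x| := abs_sub _ _
        _ ≤ 1 + s := by
            rw [abs_mul, abs_of_pos hs]
            gcongr
            · exact Real.abs_sin_le_one x
            · calc s * |Real.cos x| ≤ s * 1 := by gcongr; exact Real.abs_cos_le_one x
                _ = s := mul_one s
    · rw [show (0:ℝ) = 0 * ((1+s)/(1+s^2)) by ring]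
      apply Tendsto.mul_const
      have : Tendsto (fun x : ℝ => s * x) atTop atTop :=
        Tendsto.const_mul_atTop hs tendsto_id
      exact (Real.tendsto_exp_neg_atTop_nhds_zero).comp this
  have := integral_Ioi_of_hasDerivAt_of_tendsto' hderiv (expcos_integrable hs) htend
  rw [this]
  norm_num
  ring

lemma integral_exp_Ioi {s : ℝ} (hs : 0 < s) :
    ∫ x in Ioi (0:ℝ), Real.exp (-(s * x)) = 1 / s := by
  have := Real.integral_rpow_mul_exp_neg_mul_Ioi (a := 1) (r := s) one_pos hs
  simp only [sub_self, Real.rpow_zero, one_mul, Real.rpow_one, Real.Gamma_one, mul_one] at this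
  exact this

lemma integral_mul_exp_Ioi {x : ℝ} (hx : 0 < x) :
    ∫ s in Ioi (0:ℝ), s * Real.exp (-(s * x)) = 1 / x ^ 2 := by
  have h2 : Real.Gamma 2 = 1 := by
    rw [show (2:ℝ) = ((1:ℕ):ℝ) + 1 by norm_num, Real.Gamma_nat_eq_factorial]
    norm_num
  have := Real.integral_rpow_mul_exp_neg_mul_Ioi (a := 2) (r := x) two_pos hx
  rw [h2, mul_one] at this
  have e1 : ∀ t : ℝ, t ∈ Ioi (0:ℝ) → t ^ ((2:ℝ) - 1) * Real.exp (-(x * t)) =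
      t * Real.exp (-(t * x)) := by
    intro t ht
    rw [show (2:ℝ)-1 = 1 by norm_num, Real.rpow_one, mul_comm x t]
  rw [setIntegral_congr_fun measurableSet_Ioi e1] at this
  rw [this, show ((2:ℝ)) = ((2:ℕ):ℝ) by norm_num, Real.rpow_natCast, div_pow, one_pow]

lemma exp_integrableOn {s : ℝ} (hs : 0 < s) :
    IntegrableOn (fun x : ℝ => Real.exp (-(s * x))) (Ioi 0) := by
  simpa [neg_mul] using exp_neg_integrableOn_Ioi 0 hs

lemma integral_exp_one_sub_cos {s : ℝ} (hs : 0 < s) :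
    ∫ x in Ioi (0:ℝ), Real.exp (-(s * x)) * (1 - Real.cos x) = (1 + s ^ 2)⁻¹ / s := by
  have h : ∀ x : ℝ, Real.exp (-(s * x)) * (1 - Real.cos x)
      = Real.exp (-(s * x)) - Real.exp (-(s * x)) * Real.cos x := fun x => by ring
  rw [funext h, integral_sub (exp_integrableOn hs) (expcos_integrable hs),
    integral_exp_Ioi hs, integral_expcos hs]
  have h1 : (1:ℝ) + s ^ 2 ≠ 0 := by positivity
  field_simp
  ring

lemma core_int_and_val :
    IntegrableOn (fun x : ℝ => (1 - Real.cos x) / x ^ 2) (Ioi 0) ∧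
    ∫ x in Ioi (0:ℝ), (1 - Real.cos x) / x ^ 2 = Real.pi / 2 := by
  set ν := volume.restrict (Ioi (0:ℝ)) with hν
  set f : ℝ → ℝ → ℝ := fun s x => s * (Real.exp (-(s * x)) * (1 - Real.cos x)) with hf
  have hfm : AEStronglyMeasurable (Function.uncurry f) (ν.prod ν) := by
    apply Continuous.aestronglyMeasurable
    fun_prop
  have hnonneg : ∀ s x : ℝ, 0 ≤ s → 0 ≤ f s x := by
    intro s x hs
    have h1 : 0 ≤ 1 - Real.cos x := by have := Real.cos_le_one x; linarith
    have h2 := (Real.exp_pos (-(s * x))).le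
    exact mul_nonneg hs (mul_nonneg h2 h1)
  have hnorm : ∀ s : ℝ, 0 ≤ s → (fun x => ‖f s x‖) = fun x => f s x := by
    intro s hs; funext x; exact abs_of_nonneg (hnonneg s x hs)
  have hsec : ∀ s : ℝ, 0 < s → Integrable (fun x => f s x) ν := by
    intro s hs
    refine ((exp_integrableOn hs).const_mul (2 * s)).mono' ?_ ?_
    · apply Continuous.aestronglyMeasurable; fun_prop
    · filter_upwards with x
      rw [hnorm s hs.le |> congrFun]
      have h1 : 1 - Real.cos x ≤ 2 := by have := Real.neg_one_le_cos x; linarith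
      have h2 := Real.exp_pos (-(s * x))
      calc f s x = s * (Real.exp (-(s*x)) * (1 - Real.cos x)) := rfl
        _ ≤ s * (Real.exp (-(s*x)) * 2) := by
            apply mul_le_mul_of_nonneg_left _ hs.le
            apply mul_le_mul_of_nonneg_left h1 h2.le
        _ = 2 * s * Real.exp (-(s*x)) := by ring
  have hval : ∀ s : ℝ, 0 < s → ∫ x, f s x ∂ν = (1 + s ^ 2)⁻¹ := by
    intro s hs
    have : (fun x => f s x) = fun x => s * (Real.exp (-(s * x)) * (1 - Real.cos x)) := rfl
    rw [this, integral_const_mul, hν, integral_exp_one_sub_cos hs]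
    field_simp
  have hint : Integrable (Function.uncurry f) (ν.prod ν) := by
    refine (integrable_prod_iff hfm).2 ⟨?_, ?_⟩
    · filter_upwards [ae_restrict_mem measurableSet_Ioi] with s hs
      exact hsec s hs
    · apply (integrable_inv_one_add_sq.restrict (s := Ioi 0)).congr
      filter_upwards [ae_restrict_mem measurableSet_Ioi] with s hs
      show (1 + s^2)⁻¹ = ∫ x, ‖Function.uncurry f (s, x)‖ ∂ν
      rw [show (fun x => ‖Function.uncurry f (s, x)‖) = fun x => f s x from hnorm s hs.le]
      exact (hval s hs).symm
  have hswap := MeasureTheory.integral_integral_swap (f := f) hint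
  have hL : ∫ s, ∫ x, f s x ∂ν ∂ν = Real.pi / 2 := by
    have : ∫ s, ∫ x, f s x ∂ν ∂ν = ∫ s in Ioi (0:ℝ), (1 + s ^ 2)⁻¹ := by
      apply setIntegral_congr_ae measurableSet_Ioi
      filter_upwards with s hs
      exact hval s hs
    rw [this, integral_Ioi_inv_one_add_sq]
    simp [Real.arctan_zero]
  have hRin : ∀ x : ℝ, 0 < x → ∫ s, f s x ∂ν = (1 - Real.cos x) / x ^ 2 := by
    intro x hx
    have : (fun s => f s x) = fun s => (1 - Real.cos x) * (s * Real.exp (-(s * x))) := by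
      funext s; simp only [hf]; ring
    rw [this, integral_const_mul, hν, integral_mul_exp_Ioi hx]
    field_simp
  have hR : ∫ x, ∫ s, f s x ∂ν ∂ν = ∫ x in Ioi (0:ℝ), (1 - Real.cos x) / x ^ 2 := by
    apply setIntegral_congr_ae measurableSet_Ioi
    filter_upwards with x hx
    exact hRin x hx
  constructor
  · apply (hint.integral_prod_right).congr
    filter_upwards [ae_restrict_mem measurableSet_Ioi] with x hx
    exact hRin x hx
  · rw [← hR, ← hswap, hL]

lemma g_nonneg (x : ℝ) : 0 ≤ (1 - Real.cos x) / x ^ 2 := by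
  have := Real.cos_le_one x
  apply div_nonneg (by linarith) (sq_nonneg x)

lemma I_tendsto : Tendsto (fun B : ℝ => ∫ t in (0:ℝ)..B, (1 - Real.cos t) / t ^ 2)
    atTop (𝓝 (Real.pi / 2)) := by
  have := intervalIntegral_tendsto_integral_Ioi 0 core_int_and_val.1 (tendsto_id (α := ℝ))
  rwa [core_int_and_val.2] at this

lemma I_nonneg {B : ℝ} (hB : 0 ≤ B) : 0 ≤ ∫ t in (0:ℝ)..B, (1 - Real.cos t) / t ^ 2 :=
  intervalIntegral.integral_nonneg hB (fun x _ => g_nonneg x)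

lemma I_le {B : ℝ} (hB : 0 ≤ B) :
    ∫ t in (0:ℝ)..B, (1 - Real.cos t) / t ^ 2 ≤ Real.pi / 2 := by
  rw [intervalIntegral.integral_of_le hB, ← core_int_and_val.2]
  apply setIntegral_mono_set core_int_and_val.1
  · filter_upwards with x using g_nonneg x
  · exact (Ioc_subset_Ioi_self).eventuallyLE

lemma H_abs (y A : ℝ) : ∫ v in (0:ℝ)..A, (1 - Real.cos (v * y)) / v ^ 2
    = ∫ v in (0:ℝ)..A, (1 - Real.cos (v * |y|)) / v ^ 2 := by
  congr 1
  funext v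
  rcases abs_cases y with ⟨h, _⟩ | ⟨h, _⟩
  · rw [h]
  · rw [h, mul_neg, Real.cos_neg]

lemma H_scale {c : ℝ} (hc : 0 < c) (A : ℝ) :
    ∫ v in (0:ℝ)..A, (1 - Real.cos (v * c)) / v ^ 2
      = c * ∫ t in (0:ℝ)..(A * c), (1 - Real.cos t) / t ^ 2 := by
  have h := intervalIntegral.integral_comp_mul_right
    (fun t => (1 - Real.cos t) / t ^ 2) (a := 0) (b := A) hc.ne'
  have hpt : ∀ v : ℝ, (1 - Real.cos (v * c)) / v ^ 2
      = c ^ 2 * ((1 - Real.cos (v * c)) / (v * c) ^ 2) := by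
    intro v
    rcases eq_or_ne v 0 with rfl | hv
    · simp
    · field_simp
  rw [funext hpt, intervalIntegral.integral_const_mul, h]
  simp only [zero_mul, smul_eq_mul]
  field_simp

lemma H_tendsto (y : ℝ) :
    Tendsto (fun A : ℝ => ∫ v in (0:ℝ)..A, (1 - Real.cos (v * y)) / v ^ 2)
      atTop (𝓝 (Real.pi / 2 * |y|)) := by
  rcases eq_or_ne y 0 with rfl | hy
  · simp
  · have hc : 0 < |y| := abs_pos.2 hy
    have h1 : Tendsto (fun A : ℝ => A * |y|) atTop atTop :=
      Tendsto.atTop_mul_const hc tendsto_id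
    have h2 := (I_tendsto.comp h1).const_mul |y|
    have : (fun A : ℝ => |y| * ∫ t in (0:ℝ)..(A * |y|), (1 - Real.cos t) / t ^ 2)
        = fun A : ℝ => ∫ v in (0:ℝ)..A, (1 - Real.cos (v * y)) / v ^ 2 := by
      funext A
      rw [H_abs, H_scale hc]
    rw [← this]
    convert h2 using 2
    · rfl
    · ring

lemma H_nonneg {A : ℝ} (hA : 0 ≤ A) (y : ℝ) :
    0 ≤ ∫ v in (0:ℝ)..A, (1 - Real.cos (v * y)) / v ^ 2 :=
  intervalIntegral.integral_nonneg hA (fun x _ => by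
    have := Real.cos_le_one (x * y)
    exact div_nonneg (by linarith) (sq_nonneg x))

lemma H_le {A : ℝ} (hA : 0 ≤ A) (y : ℝ) :
    ∫ v in (0:ℝ)..A, (1 - Real.cos (v * y)) / v ^ 2 ≤ Real.pi / 2 * |y| := by
  rcases eq_or_ne y 0 with rfl | hy
  · simp
  · have hc : 0 < |y| := abs_pos.2 hy
    rw [H_abs, H_scale hc]
    calc |y| * ∫ t in (0:ℝ)..(A * |y|), (1 - Real.cos t) / t ^ 2
        ≤ |y| * (Real.pi / 2) := by
          apply mul_le_mul_of_nonneg_left (I_le (by positivity)) hc.le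
      _ = Real.pi / 2 * |y| := by ring

lemma cexp_combo (a b : ℝ) :
    Complex.exp (Complex.I * ((a + b : ℝ) : ℂ)) + Complex.exp (Complex.I * ((a - b : ℝ) : ℂ))
      - 2 * Complex.exp (Complex.I * (a : ℂ))
    = ((2 * Real.cos b - 2 : ℝ) : ℂ) * Complex.exp (Complex.I * (a : ℂ)) := by
  have h1 : Complex.I * ((a + b : ℝ) : ℂ) = (a : ℂ) * Complex.I + (b : ℂ) * Complex.I := by
    push_cast; ring
  have h2 : Complex.I * ((a - b : ℝ) : ℂ) = (a : ℂ) * Complex.I + (-b : ℂ) * Complex.I := by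
    push_cast; ring
  have h3 : Complex.I * (a : ℂ) = (a : ℂ) * Complex.I := mul_comm _ _
  rw [h1, h2, h3, Complex.exp_add, Complex.exp_add]
  simp only [Complex.exp_mul_I, Complex.cos_neg, Complex.sin_neg]
  push_cast [Complex.ofReal_cos]
  ring

lemma combo_pt (u v : ℝ) (p : ℝ × ℝ) :
    (1 / (v : ℂ) ^ 2) * (Complex.exp (Complex.I * ((u * p.1 + v * p.2 : ℝ) : ℂ))
        + Complex.exp (Complex.I * ((u * p.1 + (-v) * p.2 : ℝ) : ℂ))
        - 2 * Complex.exp (Complex.I * ((u * p.1 + 0 * p.2 : ℝ) : ℂ)))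
    = ((-2) * (1 - Real.cos (v * p.2)) / v ^ 2 : ℝ) •
        Complex.exp (Complex.I * ((u * p.1 : ℝ) : ℂ)) := by
  have e1 : (u * p.1 + v * p.2 : ℝ) = ((u * p.1) + (v * p.2) : ℝ) := by ring
  have e2 : (u * p.1 + (-v) * p.2 : ℝ) = ((u * p.1) - (v * p.2) : ℝ) := by ring
  have e3 : (u * p.1 + 0 * p.2 : ℝ) = (u * p.1 : ℝ) := by ring
  rw [e1, e2, e3, cexp_combo (u * p.1) (v * p.2), Complex.real_smul]
  push_cast
  ring

theorem charFun_second_difference_limit (μ : Measure (ℝ × ℝ)) [IsProbabilityMeasure μ]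
    (hmom : Integrable (fun p : ℝ × ℝ => ‖p‖ ^ 2) μ) (u : ℝ) :
    Tendsto (fun A : ℝ => -(1 / (Real.pi : ℂ)) *
        ∫ v in (0:ℝ)..A, (1 / (v : ℂ) ^ 2) *
          (jointCharFun μ u v + jointCharFun μ u (-v) - 2 * jointCharFun μ u 0))
      atTop
      (𝓝 (∫ p, ((|p.2| : ℝ) : ℂ) * Complex.exp (Complex.I * ((u * p.1 : ℝ) : ℂ)) ∂μ)) := by
  set g : ℝ × ℝ → ℂ := fun p => Complex.exp (Complex.I * ((u * p.1 : ℝ) : ℂ)) with hg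
  set H : ℝ → ℝ → ℝ := fun A y => ∫ v in (0:ℝ)..A, (1 - Real.cos (v * y)) / v ^ 2 with hH
  have hgnorm : ∀ p : ℝ × ℝ, ‖g p‖ = 1 := by
    intro p
    simp [hg, Complex.norm_exp, Complex.mul_re]
  have hexp_int : ∀ v : ℝ, Integrable (fun p : ℝ × ℝ =>
      Complex.exp (Complex.I * ((u * p.1 + v * p.2 : ℝ) : ℂ))) μ := by
    intro v
    apply Integrable.mono' (integrable_const (1:ℝ))
    · apply Continuous.aestronglyMeasurable; fun_prop
    · filter_upwards with p
      simp [Complex.norm_exp, Complex.mul_re]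
  set G : ℝ → ℝ × ℝ → ℂ :=
    fun v p => ((-2) * (1 - Real.cos (v * p.2)) / v ^ 2 : ℝ) • g p with hG
  -- pointwise bound on the scalar
  have hGbound : ∀ (v : ℝ) (y : ℝ), |(-2) * (1 - Real.cos (v * y)) / v ^ 2| ≤ y ^ 2 := by
    intro v y
    have hc1 : Real.cos (v * y) ≤ 1 := Real.cos_le_one _
    have habs : |(-2) * (1 - Real.cos (v * y)) / v ^ 2|
        = 2 * (1 - Real.cos (v * y)) / v ^ 2 := by
      rw [abs_div, abs_of_nonneg (sq_nonneg v)]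
      congr 1
      rw [abs_mul, abs_neg, abs_of_nonneg (by linarith : (0:ℝ) ≤ 1 - Real.cos (v * y))]
      norm_num
    rw [habs]
    rcases eq_or_ne v 0 with rfl | hv
    · simp [sq_nonneg]
    · rw [div_le_iff₀ (by positivity : (0:ℝ) < v ^ 2)]
      nlinarith [Real.one_sub_sq_div_two_le_cos (x := v * y)]
  have hy2 : Integrable (fun p : ℝ × ℝ => p.2 ^ 2) μ := by
    apply hmom.mono'
    · apply Continuous.aestronglyMeasurable; fun_prop
    · filter_upwards with p
      have h1 : |p.2| ≤ ‖p‖ := by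
        rw [← Real.norm_eq_abs]; exact norm_snd_le p
      rw [Real.norm_eq_abs, abs_of_nonneg (sq_nonneg _), ← sq_abs]
      exact pow_le_pow_left₀ (abs_nonneg _) h1 2
  have hGint : ∀ A : ℝ, Integrable (fun z : ℝ × (ℝ × ℝ) => G z.1 z.2)
      ((volume.restrict (Ioc 0 A)).prod μ) := by
    intro A
    have hone : Integrable (fun _ : ℝ => (1:ℝ)) (volume.restrict (Ioc 0 A)) :=
      integrableOn_const measure_Ioc_lt_top.ne
    have hdom := hone.mul_prod hy2
    apply hdom.mono'
    · apply Measurable.aestronglyMeasurable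
      apply Measurable.smul (f := fun z : ℝ × (ℝ × ℝ) => ((-2) * (1 - Real.cos (z.1 * z.2.2)) / z.1 ^ 2 : ℝ)) (g := fun z => g z.2)
      · fun_prop
      · fun_prop
    · filter_upwards with z
      rw [norm_smul, hgnorm, mul_one, Real.norm_eq_abs, one_mul]
      exact hGbound z.1 z.2.2
  -- pointwise value of the inner integral
  have hinner : ∀ (A : ℝ), 0 ≤ A → ∀ p : ℝ × ℝ,
      (∫ v in Ioc (0:ℝ) A, G v p) = ((-2) * H A p.2 : ℝ) • g p := by
    intro A hA p
    have : (fun v => G v p)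
        = fun v => ((-2) * ((1 - Real.cos (v * p.2)) / v ^ 2) : ℝ) • g p := by
      funext v; rw [hG]; ring_nf
    rw [this, integral_smul_const]
    congr 1
    rw [← intervalIntegral.integral_of_le hA, intervalIntegral.integral_const_mul]
  -- identity between the characteristic function combination and ∫ G
  have hcombo : ∀ v : ℝ,
      (1 / (v : ℂ) ^ 2) * (jointCharFun μ u v + jointCharFun μ u (-v)
        - 2 * jointCharFun μ u 0) = ∫ p, G v p ∂μ := by
    intro v
    unfold jointCharFun
    have h12 : Integrable (fun p : ℝ × ℝ =>
        Complex.exp (Complex.I * ((u * p.1 + v * p.2 : ℝ) : ℂ))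
          + Complex.exp (Complex.I * ((u * p.1 + (-v) * p.2 : ℝ) : ℂ))) μ :=
      (hexp_int v).add (hexp_int (-v))
    have h0 : Integrable (fun p : ℝ × ℝ =>
        2 * Complex.exp (Complex.I * ((u * p.1 + 0 * p.2 : ℝ) : ℂ))) μ :=
      (hexp_int 0).const_mul 2
    rw [← integral_add (hexp_int v) (hexp_int (-v)), ← integral_const_mul 2,
      ← integral_sub h12 h0, ← integral_const_mul]
    exact integral_congr_ae (.of_forall fun p => combo_pt u v p)
  -- main eventual equality
  have heq : ∀ A : ℝ, 0 ≤ A →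
      -(1 / (Real.pi : ℂ)) * (∫ v in (0:ℝ)..A, (1 / (v : ℂ) ^ 2) *
          (jointCharFun μ u v + jointCharFun μ u (-v) - 2 * jointCharFun μ u 0))
        = ∫ p, ((2 / Real.pi * H A p.2 : ℝ)) • g p ∂μ := by
    intro A hA
    have e1 : (∫ v in (0:ℝ)..A, (1 / (v : ℂ) ^ 2) *
          (jointCharFun μ u v + jointCharFun μ u (-v) - 2 * jointCharFun μ u 0))
        = ∫ v in (0:ℝ)..A, ∫ p, G v p ∂μ := by
      apply intervalIntegral.integral_congr
      intro v _
      exact hcombo v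
    rw [e1, intervalIntegral.integral_of_le hA,
      MeasureTheory.integral_integral_swap (f := fun v p => G v p) (hGint A)]
    rw [← integral_const_mul]
    apply integral_congr_ae (.of_forall _)
    intro p
    rw [hinner A hA p, Complex.real_smul, Complex.real_smul]
    push_cast
    have : (Real.pi : ℂ) ≠ 0 := Complex.ofReal_ne_zero.2 Real.pi_ne_zero
    field_simp
  -- rewrite the target
  have htarget : (fun p : ℝ × ℝ => ((|p.2| : ℝ) : ℂ)
      * Complex.exp (Complex.I * ((u * p.1 : ℝ) : ℂ))) = fun p => (|p.2| : ℝ) • g p := by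
    funext p; rw [Complex.real_smul]
  rw [htarget]
  -- dominated convergence
  have hmain : Tendsto (fun A : ℝ => ∫ p, ((2 / Real.pi * H A p.2 : ℝ)) • g p ∂μ)
      atTop (𝓝 (∫ p, (|p.2| : ℝ) • g p ∂μ)) := by
    apply tendsto_integral_filter_of_dominated_convergence
      (bound := fun p : ℝ × ℝ => 1 + ‖p‖ ^ 2)
    · filter_upwards [eventually_ge_atTop (0:ℝ)] with A hA
      have hmeas : AEStronglyMeasurable (fun p : ℝ × ℝ => ∫ v in Ioc (0:ℝ) A, G v p) μ :=
        ((hGint A).integral_prod_right).aestronglyMeasurable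
      apply (hmeas.const_smul (-(Real.pi)⁻¹ : ℝ)).congr
      filter_upwards with p
      simp only [Pi.smul_apply]
      rw [hinner A hA p, smul_smul]
      congr 1
      field_simp
    · filter_upwards [eventually_ge_atTop (0:ℝ)] with A hA
      filter_upwards with p
      rw [norm_smul, hgnorm, mul_one, Real.norm_eq_abs]
      have h0 : 0 ≤ H A p.2 := H_nonneg hA p.2
      have h1 : H A p.2 ≤ Real.pi / 2 * |p.2| := H_le hA p.2
      have hpi : (0:ℝ) < Real.pi := Real.pi_pos
      have h2 : 2 / Real.pi * H A p.2 ≤ |p.2| := by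
        calc 2 / Real.pi * H A p.2 ≤ 2 / Real.pi * (Real.pi / 2 * |p.2|) := by
              apply mul_le_mul_of_nonneg_left h1 (by positivity)
          _ = |p.2| := by field_simp
      have h3 : |p.2| ≤ ‖p‖ := by rw [← Real.norm_eq_abs]; exact norm_snd_le p
      have h4 : ‖p‖ ≤ 1 + ‖p‖ ^ 2 := by nlinarith [norm_nonneg p]
      rw [abs_of_nonneg (by positivity)]
      linarith
    · exact (integrable_const 1).add hmom
    · filter_upwards with p
      have h5 : Tendsto (fun A => 2 / Real.pi * H A p.2) atTop (𝓝 (|p.2|)) := by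
        have := (H_tendsto p.2).const_mul (2 / Real.pi)
        convert this using 2
        field_simp
      exact h5.smul_const (g p)
  apply hmain.congr'
  filter_upwards [eventually_ge_atTop (0:ℝ)] with A hA
  exact (heq A hA).symm
end
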